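/- Let p, q be positive integers and d = pq. Let B = {g ∈ C([0,1], M_{d²}(ℂ)) : g(0) lies in the linear span of {(X⊗1_q)⊗(Y⊗1_q) : X, Y ∈ M_p(ℂ)} and g(1) lies in the linear span of {(1_p⊗S)⊗(1_p⊗T) : S, T ∈ M_q(ℂ)}}, and let D = {f ∈ C([0,1]×[0,1], M_{d²}(ℂ)) : for all x, y ∈ [0,1], f(0,y) lies in the linear span of {(X⊗1_q)⊗Z : X ∈ M_p(ℂ), Z ∈ M_d(ℂ)}, f(1,y) lies in the linear span of {(1_p⊗S)⊗Z : S ∈ M_q(ℂ), Z ∈ M_d(ℂ)}, f(x,0) lies in the linear span of {Z⊗(X⊗1_q) : X ∈ M_p(ℂ), Z ∈ M_d(ℂ)}, and f(x,1) lies in the linear span of {Z⊗(1_p⊗S) : S ∈ M_q(ℂ), Z ∈ M_d(ℂ)}}. Then the restriction-to-the-diagonal map ρ, defined by ρ(f)(x) = f(x,x), is a ⋆-algebra homomorphism from D into B, and ρ is surjective: every g ∈ B equals ρ(f) for some f ∈ D. -/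

import Mathlib

open scoped Matrix.Norms.L2Operator ComplexOrder
open Filter MeasureTheory

noncomputable section

/-- The unit interval `[0,1]`. -/
abbrev I01 : Type := unitInterval

/-- Square complex matrices of size `N`. -/
abbrev Mat (N : ℕ) : Type := Matrix (Fin N) (Fin N) ℂ

/-- Block-diagonal matrix with `m` diagonal blocks of size `k` (block `0` in the upper left),
realized as an `N × N` matrix, where `h : k * m = N`. -/
def cdiag {k m N : ℕ} (h : k * m = N) (blocks : Fin m → Mat k) : Mat N :=
  Matrix.reindex (finProdFinEquiv.trans (finCongr h)) (finProdFinEquiv.trans (finCongr h))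
    (Matrix.blockDiagonal blocks)

/-- The Razak building block `A(n, n')` with `n' = n * (a + 1)`, realized as a subset of
`C([0,1], M_N(ℂ))` where `h : n * (a + 1) = N`: those continuous matrix-valued functions `f`
for which there is `c ∈ M_n(ℂ)` with `f 0 = diag(c, …, c, 0_n)` (`a` copies of `c`) and
`f 1 = diag(c, …, c)` (`a + 1` copies of `c`). -/
def razakA (n a : ℕ) {N : ℕ} (h : n * (a + 1) = N) : Set C(I01, Mat N) :=
  {f | ∃ c : Mat n,
    f 0 = cdiag h (fun i : Fin (a + 1) => if (i : ℕ) < a then c else 0) ∧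
    f 1 = cdiag h (fun _ : Fin (a + 1) => c)}

/-- The normalized trace of a square complex matrix. -/
def ntr {N : ℕ} (M : Mat N) : ℂ := M.trace / N

open scoped Kronecker

/-- `M_{d²}(ℂ)` with `d = pq`, indexed by `(Fin p × Fin q) × (Fin p × Fin q)`. -/
abbrev Mat2 (p q : ℕ) : Type :=
  Matrix ((Fin p × Fin q) × (Fin p × Fin q)) ((Fin p × Fin q) × (Fin p × Fin q)) ℂ

/-- The algebra `B` of continuous `M_{d²}`-valued functions on `[0,1]` whose value at `0` lies in
`span{(X⊗1_q)⊗(Y⊗1_q)}` and whose value at `1` lies in `span{(1_p⊗S)⊗(1_p⊗T)}`. -/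
def Bset (p q : ℕ) : Set C(I01, Mat2 p q) :=
  {g | g 0 ∈ Submodule.span ℂ {m : Mat2 p q | ∃ X Y : Matrix (Fin p) (Fin p) ℂ,
        m = (X ⊗ₖ (1 : Matrix (Fin q) (Fin q) ℂ)) ⊗ₖ (Y ⊗ₖ (1 : Matrix (Fin q) (Fin q) ℂ))} ∧
      g 1 ∈ Submodule.span ℂ {m : Mat2 p q | ∃ S T : Matrix (Fin q) (Fin q) ℂ,
        m = ((1 : Matrix (Fin p) (Fin p) ℂ) ⊗ₖ S) ⊗ₖ ((1 : Matrix (Fin p) (Fin p) ℂ) ⊗ₖ T)}}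

/-- The algebra `D` of continuous `M_{d²}`-valued functions on the square `[0,1] × [0,1]`
satisfying the four edge conditions. -/
def Dset (p q : ℕ) : Set C(I01 × I01, Mat2 p q) :=
  {f | ∀ x y : I01,
    f (0, y) ∈ Submodule.span ℂ {m : Mat2 p q |
      ∃ (X : Matrix (Fin p) (Fin p) ℂ) (Z : Matrix (Fin p × Fin q) (Fin p × Fin q) ℂ),
        m = (X ⊗ₖ (1 : Matrix (Fin q) (Fin q) ℂ)) ⊗ₖ Z} ∧
    f (1, y) ∈ Submodule.span ℂ {m : Mat2 p q |
      ∃ (S : Matrix (Fin q) (Fin q) ℂ) (Z : Matrix (Fin p × Fin q) (Fin p × Fin q) ℂ),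
        m = ((1 : Matrix (Fin p) (Fin p) ℂ) ⊗ₖ S) ⊗ₖ Z} ∧
    f (x, 0) ∈ Submodule.span ℂ {m : Mat2 p q |
      ∃ (X : Matrix (Fin p) (Fin p) ℂ) (Z : Matrix (Fin p × Fin q) (Fin p × Fin q) ℂ),
        m = Z ⊗ₖ (X ⊗ₖ (1 : Matrix (Fin q) (Fin q) ℂ))} ∧
    f (x, 1) ∈ Submodule.span ℂ {m : Mat2 p q |
      ∃ (S : Matrix (Fin q) (Fin q) ℂ) (Z : Matrix (Fin p × Fin q) (Fin p × Fin q) ℂ),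
        m = Z ⊗ₖ ((1 : Matrix (Fin p) (Fin p) ℂ) ⊗ₖ S)}}

lemma propL0 {p q : ℕ} (j0 : Fin q) (x : Mat2 p q)
    (hx : x ∈ Submodule.span ℂ {m : Mat2 p q |
      ∃ (X : Matrix (Fin p) (Fin p) ℂ) (Z : Matrix (Fin p × Fin q) (Fin p × Fin q) ℂ),
        m = (X ⊗ₖ (1 : Matrix (Fin q) (Fin q) ℂ)) ⊗ₖ Z}) :
    ∀ (i i' : Fin p) (j j' : Fin q) (u u' : Fin p × Fin q),
      x ((i,j),u) ((i',j'),u') = if j = j' then x ((i,j0),u) ((i',j0),u') else 0 := by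
  induction hx using Submodule.span_induction with
  | mem x hx =>
    obtain ⟨X, Z, rfl⟩ := hx
    intro i i' j j' u u'
    simp [Matrix.one_apply]
  | zero => intro i i' j j' u u'; simp
  | add x y hx hy ihx ihy =>
    intro i i' j j' u u'
    simp only [Matrix.add_apply]
    rw [ihx i i' j j' u u', ihy i i' j j' u u']
    split_ifs <;> simp
  | smul a x hx ihx =>
    intro i i' j j' u u'
    simp only [Matrix.smul_apply]
    rw [ihx i i' j j' u u']
    split_ifs <;> simp

lemma propR0 {p q : ℕ} (j0 : Fin q) (x : Mat2 p q)
    (hx : x ∈ Submodule.span ℂ {m : Mat2 p q |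
      ∃ (X : Matrix (Fin p) (Fin p) ℂ) (Z : Matrix (Fin p × Fin q) (Fin p × Fin q) ℂ),
        m = Z ⊗ₖ (X ⊗ₖ (1 : Matrix (Fin q) (Fin q) ℂ))}) :
    ∀ (u u' : Fin p × Fin q) (k k' : Fin p) (l l' : Fin q),
      x (u,(k,l)) (u',(k',l')) = if l = l' then x (u,(k,j0)) (u',(k',j0)) else 0 := by
  induction hx using Submodule.span_induction with
  | mem x hx =>
    obtain ⟨X, Z, rfl⟩ := hx
    intro u u' k k' l l'
    simp [Matrix.one_apply]
  | zero => intro u u' k k' l l'; simp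
  | add x y hx hy ihx ihy =>
    intro u u' k k' l l'
    simp only [Matrix.add_apply]
    rw [ihx u u' k k' l l', ihy u u' k k' l l']
    split_ifs <;> simp
  | smul a x hx ihx =>
    intro u u' k k' l l'
    simp only [Matrix.smul_apply]
    rw [ihx u u' k k' l l']
    split_ifs <;> simp

lemma propL1 {p q : ℕ} (i0 : Fin p) (x : Mat2 p q)
    (hx : x ∈ Submodule.span ℂ {m : Mat2 p q |
      ∃ (S : Matrix (Fin q) (Fin q) ℂ) (Z : Matrix (Fin p × Fin q) (Fin p × Fin q) ℂ),
        m = ((1 : Matrix (Fin p) (Fin p) ℂ) ⊗ₖ S) ⊗ₖ Z}) :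
    ∀ (i i' : Fin p) (j j' : Fin q) (u u' : Fin p × Fin q),
      x ((i,j),u) ((i',j'),u') = if i = i' then x ((i0,j),u) ((i0,j'),u') else 0 := by
  induction hx using Submodule.span_induction with
  | mem x hx =>
    obtain ⟨S, Z, rfl⟩ := hx
    intro i i' j j' u u'
    simp [Matrix.one_apply]
  | zero => intro i i' j j' u u'; simp
  | add x y hx hy ihx ihy =>
    intro i i' j j' u u'
    simp only [Matrix.add_apply]
    rw [ihx i i' j j' u u', ihy i i' j j' u u']
    split_ifs <;> simp
  | smul a x hx ihx =>
    intro i i' j j' u u'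
    simp only [Matrix.smul_apply]
    rw [ihx i i' j j' u u']
    split_ifs <;> simp

lemma propR1 {p q : ℕ} (i0 : Fin p) (x : Mat2 p q)
    (hx : x ∈ Submodule.span ℂ {m : Mat2 p q |
      ∃ (S : Matrix (Fin q) (Fin q) ℂ) (Z : Matrix (Fin p × Fin q) (Fin p × Fin q) ℂ),
        m = Z ⊗ₖ ((1 : Matrix (Fin p) (Fin p) ℂ) ⊗ₖ S)}) :
    ∀ (u u' : Fin p × Fin q) (k k' : Fin p) (l l' : Fin q),
      x (u,(k,l)) (u',(k',l')) = if k = k' then x (u,(i0,l)) (u',(i0,l')) else 0 := by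
  induction hx using Submodule.span_induction with
  | mem x hx =>
    obtain ⟨S, Z, rfl⟩ := hx
    intro u u' k k' l l'
    simp [Matrix.one_apply]
  | zero => intro u u' k k' l l'; simp
  | add x y hx hy ihx ihy =>
    intro u u' k k' l l'
    simp only [Matrix.add_apply]
    rw [ihx u u' k k' l l', ihy u u' k k' l l']
    split_ifs <;> simp
  | smul a x hx ihx =>
    intro u u' k k' l l'
    simp only [Matrix.smul_apply]
    rw [ihx u u' k k' l l']
    split_ifs <;> simp

lemma span_inter_zero {p q : ℕ} (hq : 0 < q) (m : Mat2 p q)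
    (h1 : m ∈ Submodule.span ℂ {m : Mat2 p q |
      ∃ (X : Matrix (Fin p) (Fin p) ℂ) (Z : Matrix (Fin p × Fin q) (Fin p × Fin q) ℂ),
        m = (X ⊗ₖ (1 : Matrix (Fin q) (Fin q) ℂ)) ⊗ₖ Z})
    (h2 : m ∈ Submodule.span ℂ {m : Mat2 p q |
      ∃ (X : Matrix (Fin p) (Fin p) ℂ) (Z : Matrix (Fin p × Fin q) (Fin p × Fin q) ℂ),
        m = Z ⊗ₖ (X ⊗ₖ (1 : Matrix (Fin q) (Fin q) ℂ))}) :
    m ∈ Submodule.span ℂ {m : Mat2 p q | ∃ X Y : Matrix (Fin p) (Fin p) ℂ,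
        m = (X ⊗ₖ (1 : Matrix (Fin q) (Fin q) ℂ)) ⊗ₖ (Y ⊗ₖ (1 : Matrix (Fin q) (Fin q) ℂ))} := by
  have j0 : Fin q := ⟨0, hq⟩
  have P1 := propL0 j0 m h1
  have P2 := propR0 j0 m h2
  have hm : m = ∑ i : Fin p, ∑ i' : Fin p, ∑ k : Fin p, ∑ k' : Fin p,
      m ((i,j0),(k,j0)) ((i',j0),(k',j0)) •
        ((Matrix.single i i' (1:ℂ) ⊗ₖ (1 : Matrix (Fin q) (Fin q) ℂ)) ⊗ₖ
         (Matrix.single k k' (1:ℂ) ⊗ₖ (1 : Matrix (Fin q) (Fin q) ℂ))) := by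
    ext ⟨⟨i,j⟩,k,l⟩ ⟨⟨i',j'⟩,k',l'⟩
    rw [P1 i i' j j' (k,l) (k',l'), P2 (i,j0) (i',j0) k k' l l']
    simp [Matrix.sum_apply, Matrix.single, Matrix.one_apply, ite_and,
      Finset.sum_ite_eq, Finset.sum_ite_eq', mul_comm]
    split_ifs <;> rfl
  rw [hm]
  exact Submodule.sum_mem _ fun i _ => Submodule.sum_mem _ fun i' _ =>
    Submodule.sum_mem _ fun k _ => Submodule.sum_mem _ fun k' _ =>
    Submodule.smul_mem _ _ (Submodule.subset_span ⟨_, _, rfl⟩)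

lemma span_inter_one {p q : ℕ} (hp : 0 < p) (m : Mat2 p q)
    (h1 : m ∈ Submodule.span ℂ {m : Mat2 p q |
      ∃ (S : Matrix (Fin q) (Fin q) ℂ) (Z : Matrix (Fin p × Fin q) (Fin p × Fin q) ℂ),
        m = ((1 : Matrix (Fin p) (Fin p) ℂ) ⊗ₖ S) ⊗ₖ Z})
    (h2 : m ∈ Submodule.span ℂ {m : Mat2 p q |
      ∃ (S : Matrix (Fin q) (Fin q) ℂ) (Z : Matrix (Fin p × Fin q) (Fin p × Fin q) ℂ),
        m = Z ⊗ₖ ((1 : Matrix (Fin p) (Fin p) ℂ) ⊗ₖ S)}) :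
    m ∈ Submodule.span ℂ {m : Mat2 p q | ∃ S T : Matrix (Fin q) (Fin q) ℂ,
        m = ((1 : Matrix (Fin p) (Fin p) ℂ) ⊗ₖ S) ⊗ₖ ((1 : Matrix (Fin p) (Fin p) ℂ) ⊗ₖ T)} := by
  have i0 : Fin p := ⟨0, hp⟩
  have P1 := propL1 i0 m h1
  have P2 := propR1 i0 m h2
  have hm : m = ∑ j : Fin q, ∑ j' : Fin q, ∑ l : Fin q, ∑ l' : Fin q,
      m ((i0,j),(i0,l)) ((i0,j'),(i0,l')) •
        (((1 : Matrix (Fin p) (Fin p) ℂ) ⊗ₖ Matrix.single j j' (1:ℂ)) ⊗ₖ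
         ((1 : Matrix (Fin p) (Fin p) ℂ) ⊗ₖ Matrix.single l l' (1:ℂ))) := by
    ext ⟨⟨i,j⟩,k,l⟩ ⟨⟨i',j'⟩,k',l'⟩
    rw [P1 i i' j j' (k,l) (k',l'), P2 (i0,j) (i0,j') k k' l l']
    simp [Matrix.sum_apply, Matrix.single, Matrix.one_apply, ite_and,
      Finset.sum_ite_eq, Finset.sum_ite_eq', mul_comm]
    split_ifs <;> rfl
  rw [hm]
  exact Submodule.sum_mem _ fun i _ => Submodule.sum_mem _ fun i' _ =>
    Submodule.sum_mem _ fun k _ => Submodule.sum_mem _ fun k' _ =>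
    Submodule.smul_mem _ _ (Submodule.subset_span ⟨_, _, rfl⟩)

/-- restriction to the diagonal is a surjective ⋆-algebra homomorphism from `D`
onto `B`. -/
theorem diagonal_restriction_surjective (p q : ℕ) (hp : 0 < p) (hq : 0 < q) :
    ∃ ρ : C(I01 × I01, Mat2 p q) → C(I01, Mat2 p q),
      (∀ (f : C(I01 × I01, Mat2 p q)) (x : I01), ρ f x = f (x, x)) ∧
      (∀ f ∈ Dset p q, ρ f ∈ Bset p q) ∧
      (∀ f g, f ∈ Dset p q → g ∈ Dset p q → ρ (f + g) = ρ f + ρ g) ∧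
      (∀ (z : ℂ) (f), f ∈ Dset p q → ρ (z • f) = z • ρ f) ∧
      (∀ f g, f ∈ Dset p q → g ∈ Dset p q → ρ (f * g) = ρ f * ρ g) ∧
      (∀ f, f ∈ Dset p q → ρ (star f) = star (ρ f)) ∧
      (∀ g ∈ Bset p q, ∃ f ∈ Dset p q, ρ f = g) := by
  have hdiag : Continuous fun x : I01 => (x, x) := continuous_id.prodMk continuous_id
  refine ⟨fun f => f.comp ⟨fun x => (x, x), hdiag⟩, fun f x => rfl, ?_, ?_, ?_, ?_, ?_, ?_⟩
  · -- maps Dset into Bset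
    intro f hf
    obtain ⟨hL, hR, hB, hT⟩ := hf 0 0
    obtain ⟨hL1, hR1, hB1, hT1⟩ := hf 1 1
    exact ⟨span_inter_zero hq _ hL hB, span_inter_one hp _ hR1 hT1⟩
  · intro f g _ _; rfl
  · intro z f _; rfl
  · intro f g _ _; rfl
  · intro f _; rfl
  · -- surjectivity
    intro g hg
    have hcont : Continuous fun z : I01 × I01 =>
        ((↑(1 - ((max z.1 z.2 : I01) : ℝ)) : ℂ)) • g (min z.1 z.2) +
          ((↑((min z.1 z.2 : I01) : ℝ) : ℂ)) • g (max z.1 z.2) := by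
      have hmin : Continuous fun z : I01 × I01 => min z.1 z.2 :=
        continuous_fst.min continuous_snd
      have hmax : Continuous fun z : I01 × I01 => max z.1 z.2 :=
        continuous_fst.max continuous_snd
      exact ((Complex.continuous_ofReal.comp
          (continuous_const.sub (continuous_subtype_val.comp hmax))).smul
          (g.continuous.comp hmin)).add
        ((Complex.continuous_ofReal.comp (continuous_subtype_val.comp hmin)).smul
          (g.continuous.comp hmax))
    set f : C(I01 × I01, Mat2 p q) := ⟨_, hcont⟩ with hfdef
    have h0 : ∀ y : I01, f (0, y) = (↑(1 - (y : ℝ)) : ℂ) • g 0 := by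
      intro y
      have h1 : min (0 : I01) y = 0 := min_eq_left y.2.1
      have h2 : max (0 : I01) y = y := max_eq_right y.2.1
      simp only [hfdef, ContinuousMap.coe_mk, h1, h2]
      norm_num
    have h1e : ∀ y : I01, f (1, y) = (↑(y : ℝ) : ℂ) • g 1 := by
      intro y
      have h1 : min (1 : I01) y = y := min_eq_right y.2.2
      have h2 : max (1 : I01) y = 1 := max_eq_left y.2.2
      simp only [hfdef, ContinuousMap.coe_mk, h1, h2]
      norm_num
    have hb : ∀ x : I01, f (x, 0) = (↑(1 - (x : ℝ)) : ℂ) • g 0 := by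
      intro x
      have h1 : min x (0 : I01) = 0 := min_eq_right x.2.1
      have h2 : max x (0 : I01) = x := max_eq_left x.2.1
      simp only [hfdef, ContinuousMap.coe_mk, h1, h2]
      norm_num
    have ht : ∀ x : I01, f (x, 1) = (↑(x : ℝ) : ℂ) • g 1 := by
      intro x
      have h1 : min x (1 : I01) = x := min_eq_left x.2.2
      have h2 : max x (1 : I01) = 1 := max_eq_right x.2.2
      simp only [hfdef, ContinuousMap.coe_mk, h1, h2]
      norm_num
    refine ⟨f, ?_, ?_⟩
    · intro x y
      refine ⟨?_, ?_, ?_, ?_⟩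
      · rw [h0 y]
        exact Submodule.smul_mem _ _ (Submodule.span_mono
          (fun m hm => by obtain ⟨X, Y, rfl⟩ := hm; exact ⟨X, _, rfl⟩) hg.1)
      · rw [h1e y]
        exact Submodule.smul_mem _ _ (Submodule.span_mono
          (fun m hm => by obtain ⟨S, T, rfl⟩ := hm; exact ⟨S, _, rfl⟩) hg.2)
      · rw [hb x]
        exact Submodule.smul_mem _ _ (Submodule.span_mono
          (fun m hm => by obtain ⟨X, Y, rfl⟩ := hm; exact ⟨Y, _, rfl⟩) hg.1)
      · rw [ht x]
        exact Submodule.smul_mem _ _ (Submodule.span_mono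
          (fun m hm => by obtain ⟨S, T, rfl⟩ := hm; exact ⟨T, _, rfl⟩) hg.2)
    · refine ContinuousMap.ext fun x => ?_
      show f (x, x) = g x
      simp only [hfdef, ContinuousMap.coe_mk, min_self, max_self]
      rw [← add_smul, ← Complex.ofReal_add, sub_add_cancel, Complex.ofReal_one, one_smul]
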